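/- arXiv:0909.2356 — 10 statements merged into one kernel-verified Lean document; each statement's English description precedes it below -/
import Mathlib

section
/- (Equation (41): additivity of displacement functions.) Let w₁, w₂, w₃ be permutations of Fin (n+1) such that Inv(w₃) = Inv(w₁) ⊔ Inv(w₂), i.e. Inv(w₁) ∩ Inv(w₂) = ∅ and Inv(w₁) ∪ Inv(w₂) = Inv(w₃). Then for every i ∈ Fin (n+1), w₃(i) + i = w₁(i) + w₂(i); equivalently δ_{w₃} = δ_{w₁} + δ_{w₂}, where δ_w(i) := w(i) − i. -/
open Finset

/-- The inversion set of a permutation `w`: pairs `(i,j)` with `i < j` and `w i > w j`. -/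
def InvSet {m : ℕ} (w : Equiv.Perm (Fin m)) : Finset (Fin m × Fin m) :=
  Finset.univ.filter fun p => p.1 < p.2 ∧ w p.2 < w p.1

private lemma count_lt_perm {m : ℕ} (w : Equiv.Perm (Fin m)) (i : Fin m) :
    (Finset.univ.filter fun j => w j < w i).card = (w i : ℕ) := by
  have h : (Finset.univ.filter fun j => w j < w i)
      = (Finset.Iio (w i)).map w.symm.toEmbedding := by
    ext j
    simp only [Finset.mem_filter, Finset.mem_univ, true_and, Finset.mem_map,
      Finset.mem_Iio, Equiv.coe_toEmbedding]
    constructor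
    · intro h; exact ⟨w j, h, w.symm_apply_apply j⟩
    · rintro ⟨k, hk, rfl⟩; simpa using hk
  rw [h, Finset.card_map, Fin.card_Iio]

private lemma key {m : ℕ} (w : Equiv.Perm (Fin m)) (i : Fin m) :
    (w i : ℤ) - (i : ℤ) =
      ((InvSet w).filter fun p => p.1 = i).card -
      ((InvSet w).filter fun p => p.2 = i).card := by
  -- A: inversions with first coordinate i, B: second coordinate i
  have hA : ((InvSet w).filter fun p => p.1 = i).card
      = (Finset.univ.filter fun j => i < j ∧ w j < w i).card := by
    apply Finset.card_bij (fun p _ => p.2)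
    · rintro ⟨a, b⟩ hp
      simp only [InvSet, Finset.mem_filter, Finset.mem_univ, true_and] at hp ⊢
      obtain ⟨⟨h1, h2⟩, rfl⟩ := hp
      exact ⟨h1, h2⟩
    · rintro ⟨a, b⟩ ha ⟨c, d⟩ hc h
      simp only [InvSet, Finset.mem_filter] at ha hc
      simp only [Prod.mk.injEq]
      exact ⟨ha.2.trans hc.2.symm, h⟩
    · intro j hj
      simp only [Finset.mem_filter, Finset.mem_univ, true_and] at hj
      exact ⟨(i, j), by simp [InvSet, hj.1, hj.2], rfl⟩
  have hB : ((InvSet w).filter fun p => p.2 = i).card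
      = (Finset.univ.filter fun j => j < i ∧ w i < w j).card := by
    apply Finset.card_bij (fun p _ => p.1)
    · rintro ⟨a, b⟩ hp
      simp only [InvSet, Finset.mem_filter, Finset.mem_univ, true_and] at hp ⊢
      obtain ⟨⟨h1, h2⟩, rfl⟩ := hp
      exact ⟨h1, h2⟩
    · rintro ⟨a, b⟩ ha ⟨c, d⟩ hc h
      simp only [InvSet, Finset.mem_filter] at ha hc
      simp only [Prod.mk.injEq]
      exact ⟨h, ha.2.trans hc.2.symm⟩
    · intro j hj
      simp only [Finset.mem_filter, Finset.mem_univ, true_and] at hj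
      exact ⟨(j, i), by simp [InvSet, hj.1, hj.2], rfl⟩
  rw [hA, hB]
  -- counting identities
  have h1 : (Finset.univ.filter fun j => w j < w i)
      = (Finset.univ.filter fun j => j < i ∧ w j < w i)
        ∪ (Finset.univ.filter fun j => i < j ∧ w j < w i) := by
    ext j
    simp only [Finset.mem_filter, Finset.mem_univ, true_and, Finset.mem_union]
    constructor
    · intro h
      rcases lt_trichotomy j i with h' | rfl | h'
      · exact Or.inl ⟨h', h⟩
      · exact absurd h (lt_irrefl _)
      · exact Or.inr ⟨h', h⟩
    · rintro (⟨_, h⟩ | ⟨_, h⟩) <;> exact h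
  have h2 : (Finset.univ.filter fun j => j < i)
      = (Finset.univ.filter fun j => j < i ∧ w j < w i)
        ∪ (Finset.univ.filter fun j => j < i ∧ w i < w j) := by
    ext j
    simp only [Finset.mem_filter, Finset.mem_univ, true_and, Finset.mem_union]
    constructor
    · intro h
      rcases lt_trichotomy (w j) (w i) with h' | h' | h'
      · exact Or.inl ⟨h, h'⟩
      · exact absurd (w.injective h') (ne_of_lt h)
      · exact Or.inr ⟨h, h'⟩
    · rintro (⟨h, _⟩ | ⟨h, _⟩) <;> exact h
  have d1 : Disjoint (Finset.univ.filter fun j => j < i ∧ w j < w i)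
      (Finset.univ.filter fun j => i < j ∧ w j < w i) := by
    rw [Finset.disjoint_left]
    intro j hj hj'
    simp only [Finset.mem_filter] at hj hj'
    exact absurd (hj.2.1.trans hj'.2.1) (lt_irrefl _)
  have d2 : Disjoint (Finset.univ.filter fun j => j < i ∧ w j < w i)
      (Finset.univ.filter fun j => j < i ∧ w i < w j) := by
    rw [Finset.disjoint_left]
    intro j hj hj'
    simp only [Finset.mem_filter] at hj hj'
    exact absurd (hj.2.2.trans hj'.2.2) (lt_irrefl _)
  have e1 := count_lt_perm w i
  have e2 : (Finset.univ.filter fun j => j < i).card = (i : ℕ) := by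
    have : (Finset.univ.filter fun j => j < i) = Finset.Iio i := by
      ext j; simp
    rw [this, Fin.card_Iio]
  rw [h1, Finset.card_union_of_disjoint d1] at e1
  rw [h2, Finset.card_union_of_disjoint d2] at e2
  omega

theorem stmt_2 (n : ℕ) (w₁ w₂ w₃ : Equiv.Perm (Fin (n + 1)))
    (hdisj : Disjoint (InvSet w₁) (InvSet w₂))
    (hunion : InvSet w₁ ∪ InvSet w₂ = InvSet w₃) :
    ∀ i : Fin (n + 1), (w₃ i : ℤ) + (i : ℤ) = (w₁ i : ℤ) + (w₂ i : ℤ) := by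
  intro i
  have k1 := key w₁ i
  have k2 := key w₂ i
  have k3 := key w₃ i
  have hA : ((InvSet w₃).filter fun p => p.1 = i).card
      = ((InvSet w₁).filter fun p => p.1 = i).card
        + ((InvSet w₂).filter fun p => p.1 = i).card := by
    rw [← hunion, Finset.filter_union,
      Finset.card_union_of_disjoint (Finset.disjoint_filter_filter hdisj)]
  have hB : ((InvSet w₃).filter fun p => p.2 = i).card
      = ((InvSet w₁).filter fun p => p.2 = i).card
        + ((InvSet w₂).filter fun p => p.2 = i).card := by
    rw [← hunion, Finset.filter_union,
      Finset.card_union_of_disjoint (Finset.disjoint_filter_filter hdisj)]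
  rw [hA, hB] at k3
  push_cast at k1 k2 k3 ⊢
  omega
end

section
/- Let w₁, w₂, w₃ be permutations of Fin (n+1) such that Inv(w₃) = Inv(w₁) ⊔ Inv(w₂) (disjoint union). Then for all λ', μ', ν' : Fin (n+1) → ℤ, the affine-action equation w₃⁻¹ ∙ ν' = w₁⁻¹ ∙ λ' + w₂⁻¹ ∙ μ' holds if and only if the homogeneous-action equation ν' = w₃·(w₁⁻¹·λ' + w₂⁻¹·μ') holds. -/
open Finset

/-- `ρ(i) = n - i` for `i : Fin (n+1)`. -/
def rho (n : ℕ) : Fin (n + 1) → ℤ := fun i => (n : ℤ) - (i : ℤ)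

/-- The homogeneous action `(w·λ)(i) = λ(w⁻¹ i)`. -/
def hAct {m : ℕ} (w : Equiv.Perm (Fin m)) (l : Fin m → ℤ) : Fin m → ℤ :=
  fun i => l (w⁻¹ i)

/-- The affine action `w ∙ λ = w·(λ + ρ) − ρ`. -/
def aAct (n : ℕ) (w : Equiv.Perm (Fin (n + 1))) (l : Fin (n + 1) → ℤ) : Fin (n + 1) → ℤ :=
  fun i => l (w⁻¹ i) + rho n (w⁻¹ i) - rho n i

lemma cardB {m : ℕ} (w : Equiv.Perm (Fin m)) (i : Fin m) :
    ((InvSet w).filter (fun p => p.1 = i)).card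
      = (univ.filter fun j => i < j ∧ w j < w i).card := by
  apply Finset.card_bij (fun p _ => p.2)
  · intro p hp
    simp only [InvSet, mem_filter, mem_univ, true_and] at hp ⊢
    obtain ⟨⟨h1, h2⟩, h3⟩ := hp
    subst h3; exact ⟨h1, h2⟩
  · intro p hp q hq h
    simp only [InvSet, mem_filter, mem_univ, true_and] at hp hq
    exact Prod.ext (hp.2.trans hq.2.symm) h
  · intro j hj
    simp only [mem_filter, mem_univ, true_and] at hj
    exact ⟨(i, j), by simp [InvSet, hj.1, hj.2], rfl⟩

lemma cardA {m : ℕ} (w : Equiv.Perm (Fin m)) (i : Fin m) :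
    ((InvSet w).filter (fun p => p.2 = i)).card
      = (univ.filter fun j => j < i ∧ w i < w j).card := by
  apply Finset.card_bij (fun p _ => p.1)
  · intro p hp
    simp only [InvSet, mem_filter, mem_univ, true_and] at hp ⊢
    obtain ⟨⟨h1, h2⟩, h3⟩ := hp
    subst h3; exact ⟨h1, h2⟩
  · intro p hp q hq h
    simp only [InvSet, mem_filter, mem_univ, true_and] at hp hq
    exact Prod.ext h (hp.2.trans hq.2.symm)
  · intro j hj
    simp only [mem_filter, mem_univ, true_and] at hj
    exact ⟨(j, i), by simp [InvSet, hj.1, hj.2], rfl⟩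

lemma keynat {m : ℕ} (w : Equiv.Perm (Fin m)) (i : Fin m) :
    (w i : ℕ) + ((InvSet w).filter (fun p => p.2 = i)).card
      = (i : ℕ) + ((InvSet w).filter (fun p => p.1 = i)).card := by
  rw [cardA, cardB]
  have hwne : ∀ j : Fin m, j ≠ i → w j ≠ w i := fun j hj h => hj (w.injective h)
  have h0 : (univ.filter fun j : Fin m => w j < w i).card = (w i : ℕ) := by
    rw [← Fin.card_Iio (w i)]
    apply Finset.card_bij (fun j _ => w j)
    · intro j hj; simp only [mem_filter, mem_univ, true_and] at hj; simpa using hj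
    · intro a _ b _ h; exact w.injective h
    · intro k hk; simp only [Finset.mem_Iio] at hk
      exact ⟨w⁻¹ k, by simpa using hk, by simp⟩
  have h1 : (univ.filter fun j : Fin m => w j < w i)
      = (univ.filter fun j => j < i ∧ w j < w i) ∪ (univ.filter fun j => i < j ∧ w j < w i) := by
    ext j
    simp only [mem_filter, mem_univ, true_and, mem_union]
    constructor
    · intro h
      rcases lt_trichotomy j i with hj | hj | hj
      · exact Or.inl ⟨hj, h⟩
      · exact absurd (hj ▸ rfl : w j = w i) (ne_of_lt h)
      · exact Or.inr ⟨hj, h⟩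
    · rintro (⟨_, h⟩ | ⟨_, h⟩) <;> exact h
  have h2 : Finset.Iio i
      = (univ.filter fun j => j < i ∧ w j < w i) ∪ (univ.filter fun j => j < i ∧ w i < w j) := by
    ext j
    simp only [mem_filter, mem_univ, true_and, mem_union, Finset.mem_Iio]
    constructor
    · intro h
      rcases lt_or_gt_of_ne (hwne j (ne_of_lt h)) with hw | hw
      · exact Or.inl ⟨h, hw⟩
      · exact Or.inr ⟨h, hw⟩
    · rintro (⟨h, _⟩ | ⟨h, _⟩) <;> exact h
  have d1 : Disjoint (univ.filter fun j : Fin m => j < i ∧ w j < w i)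
      (univ.filter fun j => i < j ∧ w j < w i) := by
    rw [Finset.disjoint_left]
    intro a ha hb
    simp only [mem_filter, mem_univ, true_and] at ha hb
    exact absurd (lt_trans ha.1 hb.1) (lt_irrefl _)
  have d2 : Disjoint (univ.filter fun j : Fin m => j < i ∧ w j < w i)
      (univ.filter fun j => j < i ∧ w i < w j) := by
    rw [Finset.disjoint_left]
    intro a ha hb
    simp only [mem_filter, mem_univ, true_and] at ha hb
    exact absurd (lt_trans ha.2 hb.2) (lt_irrefl _)
  have e1 := h0; rw [h1, Finset.card_union_of_disjoint d1] at e1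
  have e2 : (i : ℕ) = (univ.filter fun j => j < i ∧ w j < w i).card
      + (univ.filter fun j => j < i ∧ w i < w j).card := by
    rw [← Finset.card_union_of_disjoint d2, ← h2, Fin.card_Iio]
  omega

theorem stmt_3 (n : ℕ) (w₁ w₂ w₃ : Equiv.Perm (Fin (n + 1)))
    (hdisj : Disjoint (InvSet w₁) (InvSet w₂))
    (hunion : InvSet w₁ ∪ InvSet w₂ = InvSet w₃) :
    ∀ lam mu nu : Fin (n + 1) → ℤ,
      aAct n w₃⁻¹ nu = aAct n w₁⁻¹ lam + aAct n w₂⁻¹ mu ↔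
        nu = hAct w₃ (hAct w₁⁻¹ lam + hAct w₂⁻¹ mu) := by
  have hpt : ∀ i : Fin (n + 1), (w₃ i : ℤ) + (i : ℤ) = (w₁ i : ℤ) + (w₂ i : ℤ) := by
    intro i
    have k1 := keynat w₁ i
    have k2 := keynat w₂ i
    have k3 := keynat w₃ i
    have hA : ((InvSet w₃).filter (fun p => p.2 = i)).card
        = ((InvSet w₁).filter (fun p => p.2 = i)).card
          + ((InvSet w₂).filter (fun p => p.2 = i)).card := by
      rw [← hunion, Finset.filter_union,
        Finset.card_union_of_disjoint (Finset.disjoint_filter_filter hdisj)]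
    have hB : ((InvSet w₃).filter (fun p => p.1 = i)).card
        = ((InvSet w₁).filter (fun p => p.1 = i)).card
          + ((InvSet w₂).filter (fun p => p.1 = i)).card := by
      rw [← hunion, Finset.filter_union,
        Finset.card_union_of_disjoint (Finset.disjoint_filter_filter hdisj)]
    omega
  have hrho : ∀ i : Fin (n + 1),
      rho n (w₃ i) + rho n i = rho n (w₁ i) + rho n (w₂ i) := by
    intro i; have := hpt i; simp only [rho]; linarith
  intro lam mu nu
  have main : ∀ i : Fin (n + 1),
      (aAct n w₃⁻¹ nu i = (aAct n w₁⁻¹ lam + aAct n w₂⁻¹ mu) i ↔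
        nu (w₃ i) = lam (w₁ i) + mu (w₂ i)) := by
    intro i
    simp only [aAct, Pi.add_apply, inv_inv]
    constructor
    · intro h; have := hrho i; linarith
    · intro h; have := hrho i; linarith
  rw [funext_iff, funext_iff]
  constructor
  · intro h j
    have := (main (w₃⁻¹ j)).1 (h (w₃⁻¹ j))
    simpa [hAct] using this
  · intro h i
    refine (main i).2 ?_
    have := h (w₃ i)
    simpa [hAct] using this
end

section
/- Let λ, μ : Fin (n+1) → ℤ and suppose both are far from the walls, in the sense that for all i ≠ j one has 2·|(λ+ρ)(i) − (λ+ρ)(j)| > n and 2·|(μ+ρ)(i) − (μ+ρ)(j)| > n. Then Φ_{λ+μ} ⊆ Φ_λ ∪ Φ_μ; that is, for every pair i < j, if (λ+μ+ρ)(i) < (λ+μ+ρ)(j) then (λ+ρ)(i) < (λ+ρ)(j) or (μ+ρ)(i) < (μ+ρ)(j). -/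
open Finset

/-- `Φ_λ`: pairs `(i,j)` with `i < j` and `(λ+ρ)(i) < (λ+ρ)(j)`. -/
def Phi (n : ℕ) (l : Fin (n + 1) → ℤ) : Finset (Fin (n + 1) × Fin (n + 1)) :=
  Finset.univ.filter fun p => p.1 < p.2 ∧ l p.1 + rho n p.1 < l p.2 + rho n p.2

theorem stmt_5 (n : ℕ) (lam mu : Fin (n + 1) → ℤ)
    (hlam : ∀ i j : Fin (n + 1), i ≠ j →
      2 * |(lam i + rho n i) - (lam j + rho n j)| > (n : ℤ))
    (hmu : ∀ i j : Fin (n + 1), i ≠ j →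
      2 * |(mu i + rho n i) - (mu j + rho n j)| > (n : ℤ)) :
    Phi n (lam + mu) ⊆ Phi n lam ∪ Phi n mu := by
  intro p hp
  simp only [Phi, mem_filter, mem_univ, true_and, Pi.add_apply] at hp
  obtain ⟨hij, hsum⟩ := hp
  set i := p.1
  set j := p.2
  have hne : i ≠ j := ne_of_lt hij
  by_contra h
  simp only [mem_union, Phi, mem_filter, mem_univ, true_and, not_or, not_and,
    not_lt] at h
  have hA : lam j + rho n j ≤ lam i + rho n i := h.1 hij
  have hB : mu j + rho n j ≤ mu i + rho n i := h.2 hij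
  have hA' : 2 * ((lam i + rho n i) - (lam j + rho n j)) > (n : ℤ) := by
    have := hlam i j hne
    rwa [abs_of_nonneg (by linarith)] at this
  have hB' : 2 * ((mu i + rho n i) - (mu j + rho n j)) > (n : ℤ) := by
    have := hmu i j hne
    rwa [abs_of_nonneg (by linarith)] at this
  have hji : (j : ℤ) - (i : ℤ) ≤ n := by
    have := j.is_lt
    omega
  simp only [rho] at hsum hA' hB'
  linarith
end

section
/- Let λ, μ : Fin (n+1) → ℤ and suppose both are far from the walls, in the sense that for all i ≠ j one has 2·|(λ+ρ)(i) − (λ+ρ)(j)| > n and 2·|(μ+ρ)(i) − (μ+ρ)(j)| > n, and suppose moreover that λ + μ + ρ is injective. Then l(λ+μ) = l(λ) + l(μ) if and only if Φ_{λ+μ} = Φ_λ ⊔ Φ_μ (that is, Φ_λ ∩ Φ_μ = ∅ and Φ_λ ∪ Φ_μ = Φ_{λ+μ}). -/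
open Finset

theorem stmt_6 (n : ℕ) (lam mu : Fin (n + 1) → ℤ)
    (hlam : ∀ i j : Fin (n + 1), i ≠ j →
      2 * |(lam i + rho n i) - (lam j + rho n j)| > (n : ℤ))
    (hmu : ∀ i j : Fin (n + 1), i ≠ j →
      2 * |(mu i + rho n i) - (mu j + rho n j)| > (n : ℤ))
    (hreg : Function.Injective fun i => lam i + mu i + rho n i) :
    (Phi n (lam + mu)).card = (Phi n lam).card + (Phi n mu).card ↔
      (Disjoint (Phi n lam) (Phi n mu) ∧ Phi n lam ∪ Phi n mu = Phi n (lam + mu)) := by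
  -- key subset facts
  have h1 : Phi n lam ∩ Phi n mu ⊆ Phi n (lam + mu) := by
    intro p hp
    simp only [mem_inter, Phi, mem_filter, mem_univ, true_and, Pi.add_apply] at hp ⊢
    obtain ⟨⟨hij, ha⟩, ⟨_, hb⟩⟩ := hp
    have hij' : ((p.1 : ℕ) : ℤ) < ((p.2 : ℕ) : ℤ) := by exact_mod_cast hij
    simp only [rho] at ha hb ⊢
    exact ⟨hij, by linarith⟩
  have h2 : Phi n (lam + mu) ⊆ Phi n lam ∪ Phi n mu := by
    intro p hp
    simp only [mem_union, Phi, mem_filter, mem_univ, true_and, Pi.add_apply] at hp ⊢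
    obtain ⟨hij, hc⟩ := hp
    by_contra hcon
    push_neg at hcon
    obtain ⟨h1', h2'⟩ := hcon
    have hne : p.1 ≠ p.2 := ne_of_lt hij
    have ha := hlam p.1 p.2 hne
    have hb := hmu p.1 p.2 hne
    have hnla := h1' hij
    have hnlb := h2' hij
    have hj : ((p.2 : ℕ) : ℤ) ≤ (n : ℤ) := by
      exact_mod_cast Nat.lt_succ_iff.mp p.2.isLt
    have hi : (0 : ℤ) ≤ ((p.1 : ℕ) : ℤ) := Int.natCast_nonneg _
    simp only [rho] at ha hb hc hnla hnlb
    rcases abs_cases ((lam p.1 + ((n : ℤ) - (p.1 : ℤ))) - (lam p.2 + ((n : ℤ) - (p.2 : ℤ)))) with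
      ⟨e1, _⟩ | ⟨e1, _⟩ <;>
    rcases abs_cases ((mu p.1 + ((n : ℤ) - (p.1 : ℤ))) - (mu p.2 + ((n : ℤ) - (p.2 : ℤ)))) with
      ⟨e2, _⟩ | ⟨e2, _⟩ <;> omega
  constructor
  · intro hcard
    have hle : (Phi n lam ∪ Phi n mu).card ≤ (Phi n lam).card + (Phi n mu).card :=
      card_union_le _ _
    have hcle : (Phi n (lam + mu)).card ≤ (Phi n lam ∪ Phi n mu).card := card_le_card h2
    have heq : Phi n lam ∪ Phi n mu = Phi n (lam + mu) :=
      (eq_of_subset_of_card_le h2 (by omega)).symm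
    have hu : (Phi n lam ∪ Phi n mu).card = (Phi n lam).card + (Phi n mu).card := by
      rw [heq, hcard]
    have := card_union_add_card_inter (Phi n lam) (Phi n mu)
    have hint : (Phi n lam ∩ Phi n mu).card = 0 := by omega
    exact ⟨disjoint_iff_inter_eq_empty.mpr (card_eq_zero.mp hint), heq⟩
  · rintro ⟨hdisj, heq⟩
    rw [← heq, card_union_of_disjoint hdisj]
end

section
/- (Example 1.) Let a > b > 0 be integers and define λ : Fin 6 → ℤ by λ = (a, b, 0, a+2, b+2, 2). Then l(λ) = 3 and l(2λ) = 6. Consequently l(λ+λ) = l(λ) + l(λ), yet Φ_{λ+λ} ≠ Φ_λ ⊔ Φ_λ since Φ_λ ∩ Φ_λ = Φ_λ ≠ ∅; hence length additivity (condition (3)) does not imply the disjoint-union condition (6) on inversion sets. -/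
set_option maxRecDepth 8000
set_option maxHeartbeats 1000000


open Finset

theorem stmt_7 (a b : ℤ) (hab : a > b) (hb : b > 0)
    (lam : Fin 6 → ℤ) (hlam : lam = ![a, b, 0, a + 2, b + 2, 2]) :
    (Phi 5 lam).card = 3 ∧ (Phi 5 (lam + lam)).card = 6 ∧
      (Phi 5 (lam + lam)).card = (Phi 5 lam).card + (Phi 5 lam).card ∧
      Phi 5 lam ∩ Phi 5 lam = Phi 5 lam ∧ Phi 5 lam ≠ ∅ ∧
      ¬(Disjoint (Phi 5 lam) (Phi 5 lam) ∧ Phi 5 lam ∪ Phi 5 lam = Phi 5 (lam + lam)) := by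
  subst hlam
  have e1 : (((1:Fin 6)):ℕ) = 1 := rfl
  have e2 : (((2:Fin 6)):ℕ) = 2 := rfl
  have e3 : (((3:Fin 6)):ℕ) = 3 := rfl
  have e4 : (((4:Fin 6)):ℕ) = 4 := rfl
  have e5 : (((5:Fin 6)):ℕ) = 5 := rfl
  have h1 : Phi 5 ![a, b, 0, a + 2, b + 2, 2] =
      ({(1, 3), (2, 3), (2, 4)} : Finset (Fin 6 × Fin 6)) := by
    ext ⟨i, j⟩
    simp only [Phi, rho, Finset.mem_filter, Finset.mem_univ, true_and,
      Finset.mem_insert, Finset.mem_singleton, Prod.mk.injEq]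
    fin_cases i <;> fin_cases j <;>
      norm_num [Fin.lt_def, Fin.ext_iff, e1, e2, e3, e4, e5, -Fin.val_fin_lt] <;> omega
  have h2 : Phi 5 (![a, b, 0, a + 2, b + 2, 2] + ![a, b, 0, a + 2, b + 2, 2]) =
      ({(0, 3), (1, 3), (1, 4), (2, 3), (2, 4), (2, 5)} : Finset (Fin 6 × Fin 6)) := by
    ext ⟨i, j⟩
    simp only [Phi, rho, Pi.add_apply, Finset.mem_filter, Finset.mem_univ, true_and,
      Finset.mem_insert, Finset.mem_singleton, Prod.mk.injEq]
    fin_cases i <;> fin_cases j <;>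
      norm_num [Fin.lt_def, Fin.ext_iff, e1, e2, e3, e4, e5, -Fin.val_fin_lt] <;> omega
  rw [h1, h2]
  refine ⟨by decide, by decide, by decide, by decide, by decide, ?_⟩
  rintro ⟨hd, -⟩
  have := hd.eq_bot_of_le (le_refl _)
  revert this; decide
end

section
/- (Existence of a reduction step.) Let w₁, w₂, w₃ be permutations of Fin (n+1) with Inv(w₃) = Inv(w₁) ⊔ Inv(w₂) (disjoint union), and let λ', μ', ν' : Fin (n+1) → ℤ satisfy w₃⁻¹ ∙ ν' = w₁⁻¹ ∙ λ' + w₂⁻¹ ∙ μ'. Set i := w₁(n), j := w₂(n), k := w₃(n) (where n denotes the last element of Fin (n+1)). Then i + j = k + n and λ'(i) + μ'(j) = ν'(k). -/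
open Finset

lemma card_inv_last (n : ℕ) (w : Equiv.Perm (Fin (n + 1))) :
    ((InvSet w).filter (fun p => p.2 = Fin.last n)).card = n - (w (Fin.last n) : ℕ) := by
  have h1 : (InvSet w).filter (fun p => p.2 = Fin.last n)
      = (univ.filter (fun i : Fin (n+1) => w (Fin.last n) < w i)).image
        (fun i => (i, Fin.last n)) := by
    ext p
    obtain ⟨p1, p2⟩ := p
    simp only [InvSet, mem_filter, mem_image, mem_univ, true_and, filter_filter]
    constructor
    · rintro ⟨⟨h1, h2⟩, h3⟩
      subst h3
      exact ⟨p1, h2, rfl⟩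
    · rintro ⟨a, ha, heq⟩
      obtain ⟨rfl, rfl⟩ : p1 = a ∧ p2 = Fin.last n := by
        simpa [Prod.ext_iff, eq_comm] using heq
      refine ⟨⟨?_, ha⟩, rfl⟩
      exact lt_of_le_of_ne (Fin.le_last p1) (by rintro rfl; exact lt_irrefl _ ha)
  rw [h1, Finset.card_image_of_injective _ (fun a b h => (Prod.mk.injEq _ _ _ _ ▸ h).1)]
  have h2 : (univ.filter (fun i : Fin (n+1) => w (Fin.last n) < w i))
      = (univ.filter (fun a : Fin (n+1) => w (Fin.last n) < a)).image w.symm := by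
    ext i
    simp only [mem_filter, mem_univ, true_and, mem_image]
    constructor
    · intro h; exact ⟨w i, h, by simp⟩
    · rintro ⟨a, ha, rfl⟩; simpa using ha
  rw [h2, Finset.card_image_of_injective _ w.symm.injective]
  have h3 : (univ.filter (fun a : Fin (n+1) => w (Fin.last n) < a)) = Finset.Ioi (w (Fin.last n)) := by
    ext a; simp
  rw [h3, Fin.card_Ioi]
  rfl

theorem stmt_9 (n : ℕ) (w₁ w₂ w₃ : Equiv.Perm (Fin (n + 1)))
    (hdisj : Disjoint (InvSet w₁) (InvSet w₂))
    (hunion : InvSet w₁ ∪ InvSet w₂ = InvSet w₃)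
    (lam mu nu : Fin (n + 1) → ℤ)
    (hchar : aAct n w₃⁻¹ nu = aAct n w₁⁻¹ lam + aAct n w₂⁻¹ mu) :
    ((w₁ (Fin.last n) : ℕ) + (w₂ (Fin.last n) : ℕ) = (w₃ (Fin.last n) : ℕ) + n) ∧
      lam (w₁ (Fin.last n)) + mu (w₂ (Fin.last n)) = nu (w₃ (Fin.last n)) := by
  have hcard : (n - (w₁ (Fin.last n) : ℕ)) + (n - (w₂ (Fin.last n) : ℕ))
      = n - (w₃ (Fin.last n) : ℕ) := by
    rw [← card_inv_last n w₁, ← card_inv_last n w₂, ← card_inv_last n w₃, ← hunion,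
      Finset.filter_union,
      Finset.card_union_of_disjoint (Finset.disjoint_filter_filter hdisj)]
  have b1 : (w₁ (Fin.last n) : ℕ) ≤ n := Fin.is_le _
  have b2 : (w₂ (Fin.last n) : ℕ) ≤ n := Fin.is_le _
  have b3 : (w₃ (Fin.last n) : ℕ) ≤ n := Fin.is_le _
  have hidx : (w₁ (Fin.last n) : ℕ) + (w₂ (Fin.last n) : ℕ) = (w₃ (Fin.last n) : ℕ) + n := by
    omega
  refine ⟨hidx, ?_⟩
  have h := congrFun hchar (Fin.last n)
  simp only [aAct, rho, Pi.add_apply, inv_inv, Fin.val_last] at h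
  have : ((w₁ (Fin.last n) : ℕ) : ℤ) + ((w₂ (Fin.last n) : ℕ) : ℤ)
      = ((w₃ (Fin.last n) : ℕ) : ℤ) + n := by exact_mod_cast hidx
  linarith
end

section
/- (Equation (60): reduction preserves the disjoint-union condition.) Let w₁, w₂, w₃ be permutations of Fin (n+1) with Inv(w₃) = Inv(w₁) ⊔ Inv(w₂) (disjoint union). For m ∈ {1,2,3} define w̃_m : Fin n → Fin n by w̃_m(s) = w_m(s) if w_m(s) < w_m(n), and w̃_m(s) = w_m(s) − 1 if w_m(s) > w_m(n), where n denotes the last element of Fin (n+1). Then each w̃_m is a well-defined permutation of Fin n, and Inv(w̃₃) = Inv(w̃₁) ⊔ Inv(w̃₂). -/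
open Finset

/-- The reduced value of `w` at `s : Fin n`: `w(s)` if `w(s) < w(n)`, and `w(s) - 1`
if `w(s) > w(n)`. -/
def redVal {n : ℕ} (w : Equiv.Perm (Fin (n + 1))) (s : Fin n) : ℕ :=
  if (w s.castSucc : ℕ) < (w (Fin.last n) : ℕ) then (w s.castSucc : ℕ)
  else (w s.castSucc : ℕ) - 1

lemma ne_last_val {n : ℕ} (w : Equiv.Perm (Fin (n + 1))) (s : Fin n) :
    (w s.castSucc : ℕ) ≠ (w (Fin.last n) : ℕ) := by
  intro h
  have := w.injective (Fin.val_injective h)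
  exact (Fin.castSucc_lt_last s).ne (by rw [this])

lemma redVal_lt_iff {n : ℕ} (w : Equiv.Perm (Fin (n + 1))) (s₁ s₂ : Fin n) :
    redVal w s₁ < redVal w s₂ ↔ (w s₁.castSucc : ℕ) < (w s₂.castSucc : ℕ) := by
  have h₁ := ne_last_val w s₁
  have h₂ := ne_last_val w s₂
  unfold redVal
  split_ifs <;> omega

lemma redVal_lt_n {n : ℕ} (w : Equiv.Perm (Fin (n + 1))) (s : Fin n) :
    redVal w s < n := by
  have h₁ := ne_last_val w s
  have h₂ : (w s.castSucc : ℕ) < n + 1 := (w s.castSucc).isLt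
  have h₃ : (w (Fin.last n) : ℕ) < n + 1 := (w (Fin.last n)).isLt
  unfold redVal
  split_ifs <;> omega

/-- The reduced permutation. -/
noncomputable def redPerm {n : ℕ} (w : Equiv.Perm (Fin (n + 1))) : Equiv.Perm (Fin n) :=
  Equiv.ofBijective (fun s => ⟨redVal w s, redVal_lt_n w s⟩)
    (Finite.injective_iff_bijective.mp (by
      intro s₁ s₂ h
      have h' : redVal w s₁ = redVal w s₂ := congrArg Fin.val h
      have hv : (w s₁.castSucc : ℕ) = (w s₂.castSucc : ℕ) := by
        have a := redVal_lt_iff w s₁ s₂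
        have b := redVal_lt_iff w s₂ s₁
        omega
      have := w.injective (Fin.val_injective hv)
      exact Fin.castSucc_injective n this))

lemma redPerm_val {n : ℕ} (w : Equiv.Perm (Fin (n + 1))) (s : Fin n) :
    (redPerm w s : ℕ) = redVal w s := rfl

lemma mem_invSet_redPerm {n : ℕ} (w : Equiv.Perm (Fin (n + 1))) (p : Fin n × Fin n) :
    p ∈ InvSet (redPerm w) ↔ (p.1.castSucc, p.2.castSucc) ∈ InvSet w := by
  simp only [InvSet, mem_filter, mem_univ, true_and]
  constructor <;> rintro ⟨h1, h2⟩
  · refine ⟨Fin.castSucc_lt_castSucc_iff.mpr h1, ?_⟩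
    rw [Fin.lt_def] at h2 ⊢
    rw [redPerm_val, redPerm_val, redVal_lt_iff] at h2
    exact h2
  · refine ⟨Fin.castSucc_lt_castSucc_iff.mp h1, ?_⟩
    rw [Fin.lt_def] at h2 ⊢
    rw [redPerm_val, redPerm_val, redVal_lt_iff]
    exact h2

theorem stmt_10 (n : ℕ) (w₁ w₂ w₃ : Equiv.Perm (Fin (n + 1)))
    (hdisj : Disjoint (InvSet w₁) (InvSet w₂))
    (hunion : InvSet w₁ ∪ InvSet w₂ = InvSet w₃) :
    ∃ t₁ t₂ t₃ : Equiv.Perm (Fin n),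
      (∀ s : Fin n, (t₁ s : ℕ) = redVal w₁ s) ∧
      (∀ s : Fin n, (t₂ s : ℕ) = redVal w₂ s) ∧
      (∀ s : Fin n, (t₃ s : ℕ) = redVal w₃ s) ∧
      Disjoint (InvSet t₁) (InvSet t₂) ∧ InvSet t₁ ∪ InvSet t₂ = InvSet t₃ := by
  refine ⟨redPerm w₁, redPerm w₂, redPerm w₃, fun s => rfl, fun s => rfl, fun s => rfl, ?_, ?_⟩
  · rw [Finset.disjoint_left] at hdisj ⊢
    intro p h1 h2
    rw [mem_invSet_redPerm] at h1 h2
    exact hdisj h1 h2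
  · rw [Finset.ext_iff] at hunion ⊢
    intro p
    have := hunion (p.1.castSucc, p.2.castSucc)
    simp only [Finset.mem_union, mem_invSet_redPerm] at *
    exact this
end

section
/- (Reduction preserves the character equation.) Let w₁, w₂, w₃ be permutations of Fin (n+1) with Inv(w₃) = Inv(w₁) ⊔ Inv(w₂), let λ', μ', ν' : Fin (n+1) → ℤ satisfy w₃⁻¹ ∙ ν' = w₁⁻¹ ∙ λ' + w₂⁻¹ ∙ μ', and set i := w₁(n), j := w₂(n), k := w₃(n). Define λ̃' : Fin n → ℤ by λ̃'(s) = λ'(s) if s < i and λ̃'(s) = λ'(s+1) otherwise, and define μ̃', ν̃' analogously using j and k. Define w̃_m : Fin n → Fin n (m = 1,2,3) by w̃_m(s) = w_m(s) if w_m(s) < w_m(n) and w̃_m(s) = w_m(s) − 1 otherwise. Then w̃₃⁻¹ ∙ ν̃' = w̃₁⁻¹ ∙ λ̃' + w̃₂⁻¹ ∙ μ̃', where ∙ now denotes the affine action of permutations of Fin n with ρ̃(s) = n − 1 − s. -/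
open Finset

/-- The affine action `w ∙ λ = w·(λ + r) − r` with respect to a choice `r` of `ρ`. -/
def aActR {m : ℕ} (r : Fin m → ℤ) (w : Equiv.Perm (Fin m)) (l : Fin m → ℤ) : Fin m → ℤ :=
  fun i => l (w⁻¹ i) + r (w⁻¹ i) - r i

/-- `ρ̃(s) = n - 1 - s` for `s : Fin n`. -/
def rhoT (n : ℕ) : Fin n → ℤ := fun s => (n : ℤ) - 1 - (s : ℤ)

/-- The reduced character: drop the coordinate `i` from `l : Fin (n+1) → ℤ`. -/
def redChar {n : ℕ} (l : Fin (n + 1) → ℤ) (i : Fin (n + 1)) (s : Fin n) : ℤ :=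
  if (s : ℕ) < (i : ℕ) then l s.castSucc else l s.succ

lemma aux_red {n : ℕ} (w : Equiv.Perm (Fin (n + 1))) (t : Equiv.Perm (Fin n))
    (ht : ∀ s : Fin n, (t s : ℕ) = redVal w s) (χ : Fin (n + 1) → ℤ) (s : Fin n) :
    redChar χ (w (Fin.last n)) (t s) + rhoT n (t s)
      = χ (w s.castSucc) + rho n (w s.castSucc)
        - (if (w s.castSucc : ℕ) < (w (Fin.last n) : ℕ) then (1:ℤ) else 0) := by
  have hne : (w s.castSucc : ℕ) ≠ (w (Fin.last n) : ℕ) := by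
    intro h
    exact absurd (w.injective (Fin.ext h)) (Fin.ne_of_lt (Fin.castSucc_lt_last s))
  have hts := ht s
  unfold redVal at hts
  by_cases h : (w s.castSucc : ℕ) < (w (Fin.last n) : ℕ)
  · rw [if_pos h] at hts
    have harg : (t s).castSucc = w s.castSucc := Fin.ext (by simpa using hts)
    rw [redChar, if_pos (by rw [hts]; exact h), harg, if_pos h]
    simp only [rhoT, rho]
    have h1 : ((t s : ℕ) : ℤ) = ((w s.castSucc : ℕ) : ℤ) := by exact_mod_cast hts
    -- (no cast normalization needed)
    generalize χ (w s.castSucc) = c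
    omega
  · rw [if_neg h] at hts
    have hgt : (w (Fin.last n) : ℕ) < (w s.castSucc : ℕ) :=
      lt_of_le_of_ne (not_lt.mp h) (Ne.symm hne)
    have harg : (t s).succ = w s.castSucc := Fin.ext (by simp [Fin.val_succ, hts]; omega)
    rw [redChar, if_neg (by rw [hts]; omega), harg, if_neg h]
    simp only [rhoT, rho]
    push_cast [hts]
    generalize χ (w s.castSucc) = c
    omega

theorem stmt_11 (n : ℕ) (w₁ w₂ w₃ : Equiv.Perm (Fin (n + 1)))
    (hdisj : Disjoint (InvSet w₁) (InvSet w₂))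
    (hunion : InvSet w₁ ∪ InvSet w₂ = InvSet w₃)
    (lam mu nu : Fin (n + 1) → ℤ)
    (hchar : aActR (rho n) w₃⁻¹ nu = aActR (rho n) w₁⁻¹ lam + aActR (rho n) w₂⁻¹ mu)
    (t₁ t₂ t₃ : Equiv.Perm (Fin n))
    (ht₁ : ∀ s : Fin n, (t₁ s : ℕ) = redVal w₁ s)
    (ht₂ : ∀ s : Fin n, (t₂ s : ℕ) = redVal w₂ s)
    (ht₃ : ∀ s : Fin n, (t₃ s : ℕ) = redVal w₃ s) :
    aActR (rhoT n) t₃⁻¹ (redChar nu (w₃ (Fin.last n))) =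
      aActR (rhoT n) t₁⁻¹ (redChar lam (w₁ (Fin.last n))) +
        aActR (rhoT n) t₂⁻¹ (redChar mu (w₂ (Fin.last n))) := by
  funext s
  have hmem : ∀ w : Equiv.Perm (Fin (n + 1)),
      (s.castSucc, Fin.last n) ∈ InvSet w ↔ (w (Fin.last n) : ℕ) < (w s.castSucc : ℕ) := by
    intro w
    have hlt : s.castSucc < Fin.last n := Fin.castSucc_lt_last s
    simp only [InvSet, Finset.mem_filter, Finset.mem_univ, true_and, Fin.lt_def]
    exact ⟨fun h => h.2, fun h => ⟨hlt, h⟩⟩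
  have hne : ∀ w : Equiv.Perm (Fin (n + 1)),
      (w s.castSucc : ℕ) ≠ (w (Fin.last n) : ℕ) := by
    intro w h
    exact absurd (w.injective (Fin.ext h)) (Fin.ne_of_lt (Fin.castSucc_lt_last s))
  have h3 : (s.castSucc, Fin.last n) ∈ InvSet w₃ ↔
      (s.castSucc, Fin.last n) ∈ InvSet w₁ ∨ (s.castSucc, Fin.last n) ∈ InvSet w₂ := by
    rw [← hunion]; simp
  have hnb : ¬((s.castSucc, Fin.last n) ∈ InvSet w₁ ∧ (s.castSucc, Fin.last n) ∈ InvSet w₂) :=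
    fun ⟨a, b⟩ => Finset.disjoint_left.mp hdisj a b
  rw [hmem, hmem, hmem] at h3
  rw [hmem, hmem] at hnb
  have hC : (if (w₁ s.castSucc : ℕ) < (w₁ (Fin.last n) : ℕ) then (1:ℤ) else 0)
      + (if (w₂ s.castSucc : ℕ) < (w₂ (Fin.last n) : ℕ) then (1:ℤ) else 0)
      = 1 + (if (w₃ s.castSucc : ℕ) < (w₃ (Fin.last n) : ℕ) then (1:ℤ) else 0) := by
    have n1 := hne w₁; have n2 := hne w₂; have n3 := hne w₃
    by_cases c1 : (w₁ s.castSucc : ℕ) < (w₁ (Fin.last n) : ℕ) <;>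
      by_cases c2 : (w₂ s.castSucc : ℕ) < (w₂ (Fin.last n) : ℕ) <;>
      by_cases c3 : (w₃ s.castSucc : ℕ) < (w₃ (Fin.last n) : ℕ) <;>
      simp [c1, c2, c3] <;> omega
  have hch := congrFun hchar s.castSucc
  simp only [aActR, Pi.add_apply, inv_inv] at hch ⊢
  have e1 := aux_red w₁ t₁ ht₁ lam s
  have e2 := aux_red w₂ t₂ ht₂ mu s
  have e3 := aux_red w₃ t₃ ht₃ nu s
  have hr : rhoT n s = rho n s.castSucc - 1 := by
    simp only [rhoT, rho, Fin.coe_castSucc]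
    ring
  linarith [e1, e2, e3, hch, hC, hr]
end

section
/- (Example 9, second observation, type A.) Let w be a permutation of Fin (n+1). The function ρ + w·ρ : Fin (n+1) → ℤ is weakly decreasing (dominant) if and only if there is a partition of {0, 1, …, n} into consecutive intervals such that w reverses each interval, i.e. for each interval [a, b] of the partition and each x with a ≤ x ≤ b one has w(x) = a + b − x. (Such w are exactly the longest elements w₀(P) of the Weyl groups of standard parabolic subgroups P of GL_{n+1}.) -/
open Finset

namespace Stmt12Aux

variable (u : ℕ → ℕ)

/-- fiber of `g x = x + u x` under `g`. -/
def gS (x : ℕ) : Finset ℕ :=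
  (Finset.range (x + u x + 1)).filter (fun y => y + u y = x + u x)

lemma mem_gS_self (x : ℕ) : x ∈ gS u x := by
  simp only [gS, Finset.mem_filter, Finset.mem_range]
  exact ⟨by omega, trivial⟩

lemma gS_nonempty (x : ℕ) : (gS u x).Nonempty := ⟨x, mem_gS_self u x⟩

def aa (x : ℕ) : ℕ := (gS u x).min' (gS_nonempty u x)
def bb (x : ℕ) : ℕ := (gS u x).max' (gS_nonempty u x)

lemma mem_gS (x y : ℕ) (h : y ∈ gS u x) : y + u y = x + u x :=
  (Finset.mem_filter.1 h).2

lemma mem_gS_of (x y : ℕ) (h : y + u y = x + u x) : y ∈ gS u x := by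
  simp only [gS, Finset.mem_filter, Finset.mem_range]
  omega

lemma aa_le (x : ℕ) : aa u x ≤ x := Finset.min'_le _ _ (mem_gS_self u x)
lemma le_bb (x : ℕ) : x ≤ bb u x := Finset.le_max' _ _ (mem_gS_self u x)

lemma g_aa (x : ℕ) : aa u x + u (aa u x) = x + u x :=
  mem_gS u x _ (Finset.min'_mem _ _)
lemma g_bb (x : ℕ) : bb u x + u (bb u x) = x + u x :=
  mem_gS u x _ (Finset.max'_mem _ _)

lemma gS_eq (x y : ℕ) (h : y + u y = x + u x) : gS u y = gS u x := by
  unfold gS; rw [h]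

lemma aa_eq (x y : ℕ) (h : y + u y = x + u x) : aa u y = aa u x := by
  unfold aa; simp only [gS_eq u x y h]

lemma bb_eq (x y : ℕ) (h : y + u y = x + u x) : bb u y = bb u x := by
  unfold bb; simp only [gS_eq u x y h]

lemma squeeze (hm : Monotone fun i => i + u i) (x y : ℕ)
    (h1 : aa u x ≤ y) (h2 : y ≤ bb u x) : y + u y = x + u x := by
  have a1 := g_aa u x
  have b1 := g_bb u x
  have c1 : aa u x + u (aa u x) ≤ y + u y := hm h1
  have c2 : y + u y ≤ bb u x + u (bb u x) := hm h2
  omega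

lemma main (hinj : Function.Injective u) (hsurj : Function.Surjective u)
    (hm : Monotone fun i => i + u i) : ∀ x, x + u x = aa u x + bb u x := by
  intro x
  induction x using Nat.strong_induction_on with
  | _ x IH =>
  rcases eq_or_lt_of_le (aa_le u x) with heq | hlt
  · -- main case: x = aa u x
    have stepA : ∀ y, y < x → u y < x := by
      intro y hy
      have hgy_le : y + u y ≤ x + u x := hm hy.le
      have hne : ¬(y + u y = x + u x) := by
        intro h
        have : aa u x ≤ y := Finset.min'_le _ _ (mem_gS_of u x y h)
        omega
      have hby := g_bb u y
      have haley := aa_le u y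
      have hbbx : bb u y < x := by
        by_contra hc
        push_neg at hc
        have : x + u x ≤ bb u y + u (bb u y) := hm hc
        omega
      have := IH y hy
      omega
    have himg : Finset.image u (Finset.range x) = Finset.range x := by
      apply Finset.eq_of_subset_of_card_le
      · intro m hm'
        simp only [Finset.mem_image, Finset.mem_range] at hm' ⊢
        obtain ⟨y, hy, rfl⟩ := hm'
        exact stepA y hy
      · rw [Finset.card_image_of_injective _ hinj]
    have stepB : ∀ y, x ≤ y → x ≤ u y := by
      intro y hy
      by_contra hc
      push_neg at hc
      have hmem : u y ∈ Finset.image u (Finset.range x) := by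
        rw [himg]; simpa using hc
      simp only [Finset.mem_image, Finset.mem_range] at hmem
      obtain ⟨z, hz, hzz⟩ := hmem
      have := hinj hzz
      omega
    obtain ⟨j, hj⟩ := hsurj x
    have hxj : x ≤ j := by
      by_contra hc
      push_neg at hc
      have := stepA j hc
      omega
    have hmapsto : ∀ i ∈ Finset.Icc x j, u i ∈ Finset.Icc x j := by
      intro i hi
      simp only [Finset.mem_Icc] at hi ⊢
      refine ⟨stepB i hi.1, ?_⟩
      have := hm hi.2
      simp only at this
      omega
    have himg2 : Finset.image u (Finset.Icc x j) = Finset.Icc x j := by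
      apply Finset.eq_of_subset_of_card_le
      · intro m hm'
        simp only [Finset.mem_image] at hm'
        obtain ⟨y, hy, rfl⟩ := hm'
        exact hmapsto y hy
      · rw [Finset.card_image_of_injective _ hinj]
    have hsum1 : ∑ i ∈ Finset.Icc x j, u i = ∑ i ∈ Finset.Icc x j, i := by
      have h := Finset.sum_image (g := u) (s := Finset.Icc x j) (f := fun y => y)
        (fun a _ b _ h => hinj h)
      rw [himg2] at h
      exact h.symm
    have hsum2 : ∑ i ∈ Finset.Icc x j, (x + j - i) = ∑ i ∈ Finset.Icc x j, i := by
      apply Finset.sum_nbij' (i := fun i => x + j - i) (j := fun i => x + j - i)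
      all_goals intro a ha
      all_goals simp only [Finset.mem_Icc] at *
      all_goals omega
    have hle : ∀ i ∈ Finset.Icc x j, u i ≤ x + j - i := by
      intro i hi
      simp only [Finset.mem_Icc] at hi
      have := hm hi.2
      simp only at this
      omega
    have hpt := (Finset.sum_eq_sum_iff_of_le hle).1 (by rw [hsum1, hsum2])
    have hux : u x = j := by
      have := hpt x (by simp [Finset.mem_Icc, hxj])
      omega
    have hjmem : j ∈ gS u x := mem_gS_of u x j (by omega)
    have h1 : j ≤ bb u x := Finset.le_max' _ _ hjmem
    have h2 : bb u x ≤ j := by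
      have hgb := g_bb u x
      have := stepB (bb u x) (le_bb u x)
      omega
    omega
  · -- aa u x < x
    have hg := g_aa u x
    have h1 := IH (aa u x) hlt
    rw [aa_eq u x (aa u x) hg, bb_eq u x (aa u x) hg] at h1
    omega

end Stmt12Aux


open Stmt12Aux in
theorem stmt_12 (n : ℕ) (w : Equiv.Perm (Fin (n + 1))) :
    (Antitone fun i => rho n i + rho n (w⁻¹ i)) ↔
      ∃ a b : Fin (n + 1) → Fin (n + 1),
        -- each `x` lies in its interval `[a x, b x]`
        (∀ x, a x ≤ x ∧ x ≤ b x) ∧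
        -- the intervals form a partition: every point of the interval of `x` has
        -- the same interval
        (∀ x y, a x ≤ y → y ≤ b x → a y = a x ∧ b y = b x) ∧
        -- `w` reverses each interval: `w x = a x + b x - x`
        (∀ x, (w x : ℕ) + (x : ℕ) = (a x : ℕ) + (b x : ℕ)) := by
  constructor
  · intro hanti
    set u : ℕ → ℕ := fun i =>
      if h : i < n + 1 then ((w⁻¹ ⟨i, h⟩ : Fin (n + 1)) : ℕ) else i with hu
    have hu_lt : ∀ (i : ℕ) (h : i < n + 1), u i = ((w⁻¹ ⟨i, h⟩ : Fin (n + 1)) : ℕ) := by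
      intro i h; simp only [hu, dif_pos h]
    have hu_ge : ∀ i : ℕ, n + 1 ≤ i → u i = i := by
      intro i h; simp [hu]; omega
    have hu_small : ∀ (i : ℕ), i < n + 1 → u i < n + 1 := by
      intro i h; rw [hu_lt i h]; exact (w⁻¹ ⟨i, h⟩).isLt
    have hinj : Function.Injective u := by
      intro i j hij
      by_cases hi : i < n + 1 <;> by_cases hj : j < n + 1
      · rw [hu_lt i hi, hu_lt j hj] at hij
        have : w⁻¹ ⟨i, hi⟩ = w⁻¹ ⟨j, hj⟩ := Fin.ext hij
        have := w⁻¹.injective this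
        exact congrArg Fin.val this
      · have h1 := hu_small i hi
        rw [hu_ge j (by omega)] at hij; omega
      · have h1 := hu_small j hj
        rw [hu_ge i (by omega)] at hij; omega
      · rw [hu_ge i (by omega), hu_ge j (by omega)] at hij; exact hij
    have hsurj : Function.Surjective u := by
      intro m
      by_cases hm : m < n + 1
      · refine ⟨((w ⟨m, hm⟩ : Fin (n + 1)) : ℕ), ?_⟩
        rw [hu_lt _ (w ⟨m, hm⟩).isLt]
        simp
      · exact ⟨m, hu_ge m (by omega)⟩
    have hmono : Monotone fun i => i + u i := by
      intro i j hij
      simp only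
      by_cases hj : j < n + 1
      · have hi : i < n + 1 := by omega
        have := hanti (show (⟨i, hi⟩ : Fin (n + 1)) ≤ ⟨j, hj⟩ from hij)
        simp only [rho] at this
        rw [hu_lt i hi, hu_lt j hj]
        have e1 : ((w⁻¹ ⟨i, hi⟩ : Fin (n + 1)) : ℤ) = ((w⁻¹ ⟨i, hi⟩ : Fin (n + 1)) : ℕ) := rfl
        omega
      · by_cases hi : i < n + 1
        · have h1 := hu_small i hi
          rw [hu_ge j (by omega)]
          omega
        · rw [hu_ge i (by omega), hu_ge j (by omega)]; omega
    have hbb_lt : ∀ x : ℕ, x < n + 1 → bb u x < n + 1 := by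
      intro x hx
      by_contra hc
      push_neg at hc
      have h1 := g_bb u x
      rw [hu_ge _ hc] at h1
      have := hu_small x hx
      omega
    have haa_lt : ∀ x : ℕ, x < n + 1 → aa u x < n + 1 := by
      intro x hx
      have := aa_le u x; omega
    -- the involution property
    have hmain := main u hinj hsurj hmono
    have hwinv : ∀ x : Fin (n + 1), w⁻¹ x = w x ∧ ((w x : ℕ) + (x : ℕ) = aa u x + bb u x) := by
      intro x
      have hx : (x : ℕ) < n + 1 := x.isLt
      have hux : u (x : ℕ) = ((w⁻¹ x : Fin (n + 1)) : ℕ) := by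
        rw [hu_lt _ hx]
      have hm1 := hmain (x : ℕ)
      have h1 : aa u (x : ℕ) ≤ u (x : ℕ) ∧ u (x : ℕ) ≤ bb u (x : ℕ) := by
        have := aa_le u (x : ℕ); have := le_bb u (x : ℕ); omega
      have hsq := squeeze u hmono (x : ℕ) (u (x : ℕ)) h1.1 h1.2
      have huu : u (u (x : ℕ)) = (x : ℕ) := by omega
      have hux_lt : u (x : ℕ) < n + 1 := hu_small _ hx
      have huu' : u (u (x : ℕ)) = ((w⁻¹ (w⁻¹ x) : Fin (n + 1)) : ℕ) := by
        rw [hu_lt _ hux_lt]; congr 2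
        exact Fin.ext hux
      have hfix : w⁻¹ (w⁻¹ x) = x := Fin.ext (by rw [← huu', huu])
      have hinv : w⁻¹ x = w x := by
        have := congrArg w hfix
        simpa using this
      refine ⟨hinv, ?_⟩
      rw [← hinv, ← hux]
      omega
    refine ⟨fun x => ⟨aa u (x : ℕ), haa_lt _ x.isLt⟩,
            fun x => ⟨bb u (x : ℕ), hbb_lt _ x.isLt⟩, ?_, ?_, ?_⟩
    · intro x
      constructor
      · simp only [Fin.le_def]; exact aa_le u _
      · simp only [Fin.le_def]; exact le_bb u _
    · intro x y hay hyb
      simp only [Fin.le_def] at hay hyb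
      have hsq := squeeze u hmono (x : ℕ) (y : ℕ) hay hyb
      constructor
      · exact Fin.ext (aa_eq u _ _ hsq)
      · exact Fin.ext (bb_eq u _ _ hsq)
    · intro x
      exact (hwinv x).2
  · rintro ⟨a, b, h1, h2, h3⟩
    have hwmem : ∀ x, a x ≤ w x ∧ w x ≤ b x := by
      intro x
      have e := h3 x
      have hx1 : (a x : ℕ) ≤ (x : ℕ) := (h1 x).1
      have hx2 : (x : ℕ) ≤ (b x : ℕ) := (h1 x).2
      constructor <;> simp only [Fin.le_def] <;> omega
    have hinv : ∀ x, w (w x) = x := by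
      intro x
      obtain ⟨ha, hb⟩ := h2 x (w x) (hwmem x).1 (hwmem x).2
      have e1 := h3 (w x)
      have e2 := h3 x
      rw [ha, hb] at e1
      exact Fin.ext (by omega)
    have hw_inv : ∀ x, w⁻¹ x = w x := by
      intro x
      conv_lhs => rw [← hinv x]
      simp
    intro i j hij
    simp only [rho]
    rw [hw_inv i, hw_inv j]
    have e1 := h3 i
    have e2 := h3 j
    have hij' : (i : ℕ) ≤ (j : ℕ) := hij
    have hsum : (a i : ℕ) + (b i : ℕ) ≤ (a j : ℕ) + (b j : ℕ) := by
      rcases le_or_gt (j : Fin (n + 1)) (b i) with h | h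
      · obtain ⟨ha, hb⟩ := h2 i j (le_trans (h1 i).1 hij) h
        rw [ha, hb]
      · have hby : (b i : ℕ) < (a j : ℕ) := by
          by_contra hc
          push_neg at hc
          have hc' : a j ≤ b i := by simp only [Fin.le_def]; exact hc
          have hbb : b i ≤ b j := le_trans h.le (h1 j).2
          obtain ⟨ha', hb'⟩ := h2 j (b i) hc' hbb
          have hfix : b (b i) = b i :=
            (h2 i (b i) (le_trans (h1 i).1 (h1 i).2) (le_refl _)).2
          rw [hfix] at hb'
          have hlt : (b i : ℕ) < (j : ℕ) := h
          have hle : (j : ℕ) ≤ (b j : ℕ) := (h1 j).2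
          rw [hb'] at hlt
          omega
        have hai : (a i : ℕ) ≤ (b i : ℕ) := le_trans (h1 i).1 (h1 i).2
        have haj : (a j : ℕ) ≤ (b j : ℕ) := le_trans (h1 j).1 (h1 j).2
        omega
    omega
end

section
/- The number of permutations w of Fin (n+1) such that ρ + w·ρ is weakly decreasing (dominant) is exactly 2^n. (Equivalently, there are exactly 2^n permutations that reverse each block of some partition of {0, 1, …, n} into consecutive intervals, matching the 2^n standard parabolic subgroups of GL_{n+1}.) -/
open Finset

namespace Stmt13

def Mon {N : ℕ} (σ : Equiv.Perm (Fin (N + 1))) : Prop :=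
  Monotone fun i : Fin (N + 1) => (i : ℕ) + (σ i : ℕ)

lemma mon_le {N : ℕ} {σ : Equiv.Perm (Fin (N + 1))} (h : Mon σ) {i j : Fin (N + 1)}
    (hij : i ≤ j) : (i : ℕ) + (σ i : ℕ) ≤ (j : ℕ) + (σ j : ℕ) := h hij

lemma succAbove_val {N : ℕ} (p : Fin (N + 1)) (v : Fin N) :
    ((p.succAbove v : Fin (N + 1)) : ℕ) =
      if (v : ℕ) < (p : ℕ) then (v : ℕ) else (v : ℕ) + 1 := by
  rcases lt_or_ge (Fin.castSucc v) p with h | h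
  · rw [Fin.succAbove_of_castSucc_lt _ _ h]
    have hv : (v : ℕ) < (p : ℕ) := by simpa [Fin.lt_def] using h
    simp [hv]
  · rw [Fin.succAbove_of_le_castSucc _ _ h]
    have hv : ¬ ((v : ℕ) < (p : ℕ)) := by
      simp only [Fin.le_def, Fin.coe_castSucc] at h; omega
    simp [hv]

lemma descent {N : ℕ} {σ : Equiv.Perm (Fin (N + 1))} (h : Mon σ) (i : Fin N)
    (hd : (σ i.succ : ℕ) < (σ i.castSucc : ℕ)) :
    (σ i.succ : ℕ) + 1 = (σ i.castSucc : ℕ) := by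
  have h1 := mon_le h (Fin.castSucc_le_succ i)
  simp only [Fin.coe_castSucc, Fin.val_succ] at h1
  omega

def ins {N : ℕ} (p : Fin (N + 1)) (τ : Equiv.Perm (Fin N)) : Equiv.Perm (Fin (N + 1)) :=
  (finSuccEquivLast.trans τ.optionCongr).trans (finSuccEquiv' p).symm

lemma ins_castSucc {N : ℕ} (p : Fin (N + 1)) (τ : Equiv.Perm (Fin N)) (j : Fin N) :
    ins p τ j.castSucc = p.succAbove (τ j) := by
  simp [ins, Equiv.trans_apply, finSuccEquivLast_castSucc, Equiv.optionCongr_apply,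
    finSuccEquiv'_symm_some]

lemma ins_last {N : ℕ} (p : Fin (N + 1)) (τ : Equiv.Perm (Fin N)) :
    ins p τ (Fin.last N) = p := by
  simp [ins, Equiv.trans_apply, finSuccEquivLast_last, Equiv.optionCongr_apply,
    finSuccEquiv'_symm_none]

def pivot {n : ℕ} (b : Bool) (τ : Equiv.Perm (Fin (n + 1))) : Fin (n + 2) :=
  if b then (τ (Fin.last n)).castSucc else Fin.last (n + 1)

lemma pivot_true {n : ℕ} (τ : Equiv.Perm (Fin (n + 1))) :
    pivot true τ = (τ (Fin.last n)).castSucc := rfl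

lemma pivot_false {n : ℕ} (τ : Equiv.Perm (Fin (n + 1))) :
    pivot false τ = Fin.last (n + 1) := rfl

lemma mon_ins {n : ℕ} {τ : Equiv.Perm (Fin (n + 1))} (p : Fin (n + 2))
    (hj : (if (τ (Fin.last n) : ℕ) < (p : ℕ) then (τ (Fin.last n) : ℕ)
        else (τ (Fin.last n) : ℕ) + 1) ≤ (p : ℕ) + 1)
    (hns : ∀ i : Fin n, ¬ ((τ i.succ : ℕ) < (p : ℕ) ∧ (p : ℕ) ≤ (τ i.castSucc : ℕ)))
    (hτ : Mon τ) : Mon (ins p τ) := by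
  rw [Mon, Fin.monotone_iff_le_succ]
  intro i
  induction i using Fin.lastCases with
  | last =>
    rw [Fin.succ_last, ins_castSucc, ins_last]
    simp only [Fin.coe_castSucc, Fin.val_last, succAbove_val]
    split at hj <;> split <;> omega
  | cast i' =>
    rw [Fin.succ_castSucc, ins_castSucc, ins_castSucc]
    have hab := mon_le hτ (Fin.castSucc_le_succ i')
    have hns' := hns i'
    simp only [Fin.coe_castSucc, Fin.val_succ, succAbove_val] at hab ⊢
    split <;> split <;> omega

lemma pivot_cond {n : ℕ} (b : Bool) {τ : Equiv.Perm (Fin (n + 1))} (hτ : Mon τ) :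
    Mon (ins (pivot b τ) τ) := by
  cases b with
  | false =>
    apply mon_ins _ _ _ hτ
    · rw [pivot_false]
      simp only [Fin.val_last]
      have := (τ (Fin.last n)).isLt
      split <;> omega
    · intro i
      rw [pivot_false]
      simp only [Fin.val_last]
      have := (τ i.castSucc).isLt
      omega
  | true =>
    apply mon_ins _ _ _ hτ
    · rw [pivot_true]
      simp only [Fin.coe_castSucc]
      split <;> omega
    · intro i
      rw [pivot_true]
      simp only [Fin.coe_castSucc]
      rintro ⟨h1, h2⟩
      have hd : (τ i.succ : ℕ) < (τ i.castSucc : ℕ) := lt_of_lt_of_le h1 h2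
      have hc := descent hτ i hd
      have hEq : (τ (Fin.last n) : ℕ) = (τ i.castSucc : ℕ) := by omega
      have heq2 : i.castSucc = Fin.last n := τ.injective (Fin.ext hEq.symm)
      exact absurd heq2 (ne_of_lt (Fin.castSucc_lt_last i))



lemma last_block {n : ℕ} {σ : Equiv.Perm (Fin (n + 2))} (hσ : Mon σ)
    (h : σ (Fin.last (n + 1)) ≠ Fin.last (n + 1)) :
    (σ (Fin.castSucc (Fin.last n)) : ℕ) = (σ (Fin.last (n + 1)) : ℕ) + 1 := by
  set N := n + 1 with hN
  set s : Fin (N + 1) := σ (Fin.last N) with hs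
  set m : Fin (N + 1) := σ.symm (Fin.last N) with hm
  have hσm : σ m = Fin.last N := Equiv.apply_symm_apply σ _
  have hfle : ∀ i : Fin (N + 1), (i : ℕ) + (σ i : ℕ) ≤ N + (s : ℕ) := by
    intro i
    have := mon_le hσ (Fin.le_last i)
    simpa [Fin.val_last] using this
  have hm_le_s : (m : ℕ) ≤ (s : ℕ) := by
    have := hfle m
    rw [hσm] at this
    simp only [Fin.val_last] at this
    omega
  have hge : ∀ r : Fin (N + 1), m ≤ r → (m : ℕ) ≤ (σ r : ℕ) := by
    intro r hr
    have h1 := mon_le hσ hr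
    rw [hσm] at h1
    simp only [Fin.val_last] at h1
    have hrN : (r : ℕ) ≤ N := Nat.lt_succ_iff.mp r.isLt
    omega
  have hq : m ≤ σ.symm m := by
    by_contra hlt
    push_neg at hlt
    have maps : ∀ a ∈ Finset.Ici m, σ a ∈ Finset.Ioi m := by
      intro a ha
      rw [Finset.mem_Ici] at ha
      rw [Finset.mem_Ioi]
      have h1 := hge a ha
      have h2 : σ a ≠ m := by
        intro hEq
        have : a = σ.symm m := by rw [← hEq, Equiv.symm_apply_apply]
        rw [this] at ha
        exact absurd (lt_of_le_of_lt ha hlt) (lt_irrefl _)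
      exact lt_of_le_of_ne (Fin.le_def.mpr h1) (Ne.symm h2)
    have hcard := Finset.card_le_card_of_injOn σ maps (σ.injective.injOn)
    rw [Fin.card_Ici, Fin.card_Ioi] at hcard
    have : (m : ℕ) < N + 1 := m.isLt
    omega
  have h2 := mon_le hσ hq
  rw [hσm, Equiv.apply_symm_apply] at h2
  simp only [Fin.val_last] at h2
  have hqN : (σ.symm m : ℕ) = N := by
    have := Nat.lt_succ_iff.mp (σ.symm m).isLt
    omega
  have hqlast : σ.symm m = Fin.last N := by
    apply Fin.ext; rw [hqN, Fin.val_last]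
  have hsm : s = m := by
    rw [hs, ← hqlast, Equiv.apply_symm_apply]
  have hσs : (σ s : ℕ) = N := by rw [hsm, hσm, Fin.val_last]
  -- s ≤ castSucc (last n)
  have hsne : s ≠ Fin.last N := h
  have hsval : (s : ℕ) < N := by
    have h3 := Nat.lt_succ_iff.mp s.isLt
    rcases lt_or_eq_of_le h3 with h4 | h4
    · exact h4
    · exact absurd (Fin.ext (by rw [h4, Fin.val_last])) hsne
  have hsr : s ≤ Fin.castSucc (Fin.last n) := by
    rw [Fin.le_def]
    simp only [Fin.coe_castSucc, Fin.val_last]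
    omega
  have h5 := mon_le hσ hsr
  rw [hσs] at h5
  have h6 := hfle (Fin.castSucc (Fin.last n))
  simp only [Fin.coe_castSucc, Fin.val_last] at h5 h6 ⊢
  omega


def B {n : ℕ} (x : Bool × {τ : Equiv.Perm (Fin (n + 1)) // Mon τ}) :
    {σ : Equiv.Perm (Fin (n + 2)) // Mon σ} :=
  ⟨ins (pivot x.1 x.2.1) x.2.1, pivot_cond x.1 x.2.2⟩

lemma B_inj {n : ℕ} : Function.Injective (@B n) := by
  rintro ⟨b, τ, hτ⟩ ⟨b', τ', hτ'⟩ h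
  have h1 : ins (pivot b τ) τ = ins (pivot b' τ') τ' := congrArg Subtype.val h
  have hp : pivot b τ = pivot b' τ' := by
    rw [← ins_last (pivot b τ) τ, h1, ins_last]
  have hb : b = b' := by
    cases b <;> cases b'
    · rfl
    · rw [pivot_false, pivot_true] at hp
      exact absurd hp.symm (ne_of_lt (Fin.castSucc_lt_last _))
    · rw [pivot_true, pivot_false] at hp
      exact absurd hp (ne_of_lt (Fin.castSucc_lt_last _))
    · rfl
  subst hb
  have hτeq : τ = τ' := by
    apply Equiv.ext
    intro j
    have h2 : ins (pivot b τ) τ j.castSucc = ins (pivot b τ') τ' j.castSucc := by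
      rw [h1]
    rw [ins_castSucc, ins_castSucc, ← hp] at h2
    exact Fin.succAbove_right_injective h2
  subst hτeq
  rfl

lemma B_surj {n : ℕ} : Function.Surjective (@B n) := by
  rintro ⟨σ, hσ⟩
  set p : Fin (n + 2) := σ (Fin.last (n + 1)) with hp
  set e : Option (Fin (n + 1)) ≃ Option (Fin (n + 1)) :=
    (finSuccEquivLast.symm.trans (σ.trans (finSuccEquiv' p))) with he
  set τ : Equiv.Perm (Fin (n + 1)) := e.removeNone with hτdef
  have hsome : ∀ j : Fin (n + 1), σ j.castSucc = p.succAbove (τ j) := by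
    intro j
    have hne : σ j.castSucc ≠ p := by
      intro hEq
      have := σ.injective hEq
      exact absurd this (ne_of_lt (Fin.castSucc_lt_last j))
    obtain ⟨v, hv⟩ := Fin.exists_succAbove_eq hne
    have hesome : e (some j) = some v := by
      simp only [he, Equiv.trans_apply, finSuccEquivLast_symm_some]
      rw [← hv, finSuccEquiv'_succAbove]
    have h3 := Equiv.removeNone_some e ⟨v, hesome⟩
    rw [hesome] at h3
    have h4 : τ j = v := Option.some_injective _ h3
    rw [h4, hv]
  have hval : ∀ j : Fin (n + 1), (σ j.castSucc : ℕ) =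
      if ((τ j : Fin (n + 1)) : ℕ) < (p : ℕ) then (τ j : ℕ) else (τ j : ℕ) + 1 := by
    intro j
    rw [hsome j, succAbove_val]
  have hMonτ : Mon τ := by
    rw [Mon, Fin.monotone_iff_le_succ]
    intro i
    have h1 := mon_le hσ (show (i.castSucc).castSucc ≤ (i.succ).castSucc from
      Fin.castSucc_le_castSucc_iff.mpr (Fin.castSucc_le_succ i))
    rw [hval i.castSucc, hval i.succ] at h1
    simp only [Fin.coe_castSucc, Fin.val_succ] at h1 ⊢
    split at h1 <;> split at h1 <;> omega
  by_cases hpl : p = Fin.last (n + 1)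
  · refine ⟨⟨false, τ, hMonτ⟩, ?_⟩
    apply Subtype.ext
    apply Equiv.ext
    intro x
    show ins (pivot false τ) τ x = σ x
    induction x using Fin.lastCases with
    | last => rw [ins_last, pivot_false, ← hp, hpl]
    | cast j => rw [ins_castSucc, pivot_false, ← hpl, hsome j]
  · refine ⟨⟨true, τ, hMonτ⟩, ?_⟩
    have hstar := last_block hσ (by rw [← hp]; exact hpl)
    rw [← hp] at hstar
    have hτlast : (τ (Fin.last n)).castSucc = p := by
      have h5 := hval (Fin.last n)
      apply Fin.ext
      rw [Fin.coe_castSucc]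
      split at h5 <;> omega
    apply Subtype.ext
    apply Equiv.ext
    intro x
    show ins (pivot true τ) τ x = σ x
    induction x using Fin.lastCases with
    | last => rw [ins_last, pivot_true, hτlast, hp]
    | cast j => rw [ins_castSucc, pivot_true, hτlast, hsome j]

lemma step (n : ℕ) :
    Nat.card {σ : Equiv.Perm (Fin (n + 2)) // Mon σ} =
      2 * Nat.card {τ : Equiv.Perm (Fin (n + 1)) // Mon τ} := by
  have hbij : Function.Bijective (@B n) := ⟨B_inj, B_surj⟩
  rw [← Nat.card_congr (Equiv.ofBijective _ hbij), Nat.card_prod]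
  congr 1
  simp [Nat.card_eq_fintype_card]

lemma count (n : ℕ) : Nat.card {σ : Equiv.Perm (Fin (n + 1)) // Mon σ} = 2 ^ n := by
  induction n with
  | zero =>
    rw [pow_zero]
    haveI : Subsingleton (Fin (0 + 1)) := Fin.subsingleton_one
    have hmon : Mon (1 : Equiv.Perm (Fin (0 + 1))) := by
      intro i j _
      have : i = j := Subsingleton.elim i j
      rw [this]
    have : Nonempty {σ : Equiv.Perm (Fin (0 + 1)) // Mon σ} := ⟨⟨1, hmon⟩⟩
    exact Nat.card_unique
  | succ k ih =>
    rw [step k, ih]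
    ring

end Stmt13

theorem stmt_13 (n : ℕ) :
    Nat.card {w : Equiv.Perm (Fin (n + 1)) //
        Antitone fun i => rho n i + rho n (w⁻¹ i)} = 2 ^ n := by
  rw [← Stmt13.count n]
  apply Nat.card_congr
  refine Equiv.subtypeEquiv (Equiv.inv (Equiv.Perm (Fin (n + 1)))) (fun w => ?_)
  have hinv : (Equiv.inv (Equiv.Perm (Fin (n + 1)))) w = w⁻¹ := rfl
  rw [hinv]
  constructor
  · intro hA i j hij
    have h1 := hA hij
    simp only [rho] at h1
    simp only []
    omega
  · intro hM i j hij
    have h1 : (i : ℕ) + ((w⁻¹ i : Fin (n + 1)) : ℕ) ≤ (j : ℕ) + ((w⁻¹ j : Fin (n + 1)) : ℕ) :=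
      hM hij
    simp only [rho]
    omega
end
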